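/- Let L be a frame, C a lattice congruence on L, and a, b ∈ L. Then (a,b) belongs to the frame congruence g(C) generated by C if and only if there exist an ordinal γ and a monotone function x from the ordinals ≤ γ to L such that x(0) ≤ a ⊓ b, a ⊔ b ≤ x(γ), (x(α), x(α+1)) ∈ C for every α < γ, and x(β) = ⨆_{α < β} x(α) for every limit ordinal β ≤ γ. -/

import Mathlib

universe u

/-- A lattice congruence on a frame `L`: an equivalence relation closed under
binary meets and binary joins (pointwise). -/
def IsLatticeCongruence {L : Type u} [Order.Frame L] (C : Set (L × L)) : Prop :=
  Equivalence (fun a b : L => (a, b) ∈ C) ∧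
    ∀ p q : L × L, p ∈ C → q ∈ C →
      (p.1 ⊓ q.1, p.2 ⊓ q.2) ∈ C ∧ (p.1 ⊔ q.1, p.2 ⊔ q.2) ∈ C

/-- A frame congruence on a frame `L`: an equivalence relation closed under
binary meets and arbitrary joins (pointwise). -/
def IsFrameCongruence {L : Type u} [Order.Frame L] (C : Set (L × L)) : Prop :=
  Equivalence (fun a b : L => (a, b) ∈ C) ∧
    (∀ p q : L × L, p ∈ C → q ∈ C → (p.1 ⊓ q.1, p.2 ⊓ q.2) ∈ C) ∧
    ∀ S : Set (L × L), S ⊆ C → (sSup (Prod.fst '' S), sSup (Prod.snd '' S)) ∈ C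

/-- The smallest frame congruence containing a relation `R`. -/
def frameCongGen {L : Type u} [Order.Frame L] (R : Set (L × L)) : Set (L × L) :=
  ⋂₀ {C | IsFrameCongruence C ∧ R ⊆ C}

namespace FrameCongAux

open Ordinal

variable {L : Type u} [Order.Frame L] {C : Set (L × L)}

def ChainOn (C : Set (L × L)) (γ : Ordinal.{u}) (x : Ordinal.{u} → L) : Prop :=
  MonotoneOn x (Set.Iic γ) ∧
    (∀ α < γ, (x α, x (α + 1)) ∈ C) ∧
    (∀ β ≤ γ, Order.IsSuccLimit β → x β = ⨆ α : Set.Iio β, x α)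

def Reach (C : Set (L × L)) (u v : L) : Prop :=
  ∃ γ x, ChainOn C γ x ∧ x 0 = u ∧ x γ = v

theorem Reach.le {u v : L} (h : Reach C u v) : u ≤ v := by
  obtain ⟨γ, x, hx, h0, hγ⟩ := h
  subst h0; subst hγ
  exact hx.1 (Set.mem_Iic.2 ((zero_le (a := γ)))) (Set.mem_Iic.2 le_rfl) ((zero_le (a := γ)))

theorem reach_refl (u : L) : Reach C u u := by
  refine ⟨0, fun _ => u, ⟨monotoneOn_const, ?_, ?_⟩, rfl, rfl⟩
  · intro α hα; exact absurd hα ((not_lt_zero (a := α)))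
  · intro β hβ hlim; exact absurd hlim.pos hβ.not_gt

theorem reach_single (hC : IsLatticeCongruence C) {u v : L} (h : (u, v) ∈ C)
    (huv : u ≤ v) : Reach C u v := by
  refine ⟨1, fun α => if α = 0 then u else v, ⟨?_, ?_, ?_⟩, if_pos rfl, if_neg one_ne_zero⟩
  · intro α _ β _ hαβ
    by_cases hα : α = 0
    · by_cases hβ : β = 0 <;> simp [hα, hβ, huv]
    · have hβ : β ≠ 0 := fun hβ0 => hα (le_antisymm (hβ0 ▸ hαβ) ((zero_le (a := α))))
      simp [hα, hβ]
  · intro α hα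
    have hα0 : α = 0 := Ordinal.lt_one_iff_zero.1 hα
    subst hα0
    simpa [zero_add, one_ne_zero] using h
  · intro β hβ hlim
    rcases Ordinal.le_one_iff.1 hβ with rfl | rfl
    · exact absurd hlim.pos (lt_irrefl 0)
    · exact absurd hlim (by rw [← Ordinal.succ_zero]; exact Order.not_isSuccLimit_succ 0)

theorem Reach.map {u v : L} (h : Reach C u v) (f : L → L) (hf : Monotone f)
    (hfC : ∀ p ∈ C, (f (Prod.fst p), f (Prod.snd p)) ∈ C)
    (hfsup : ∀ (ι : Type (u + 1)) [Nonempty ι] (g : ι → L), f (⨆ i, g i) = ⨆ i, f (g i)) :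
    Reach C (f u) (f v) := by
  obtain ⟨γ, x, hx, h0, hγ⟩ := h
  refine ⟨γ, f ∘ x, ⟨hf.comp_monotoneOn hx.1, ?_, ?_⟩, by simp [h0], by simp [hγ]⟩
  · intro α hα; exact hfC _ (hx.2.1 α hα)
  · intro β hβ hlim
    have : Nonempty (Set.Iio β) := ⟨⟨0, hlim.pos⟩⟩
    show f (x β) = _
    rw [hx.2.2 β hβ hlim, hfsup]
    rfl

theorem reach_sup_left (hC : IsLatticeCongruence C) (t : L) {u v : L} (h : Reach C u v) :
    Reach C (t ⊔ u) (t ⊔ v) := by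
  refine h.map (fun z => t ⊔ z) (fun a b hab => sup_le_sup_left hab t) ?_ ?_
  · intro p hp
    exact (hC.2 (t, t) p (hC.1.1 t) hp).2
  · intro ι _ g
    exact sup_iSup

theorem reach_inf_left (hC : IsLatticeCongruence C) (t : L) {u v : L} (h : Reach C u v) :
    Reach C (t ⊓ u) (t ⊓ v) := by
  refine h.map (fun z => t ⊓ z) (fun a b hab => inf_le_inf_left t hab) ?_ ?_
  · intro p hp
    exact (hC.2 (t, t) p (hC.1.1 t) hp).1
  · intro ι _ g
    exact inf_iSup_eq t g

theorem Reach.up (hC : IsLatticeCongruence C) {u v t : L} (h : Reach C u v) (ht : u ≤ t) :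
    Reach C t (t ⊔ v) := by
  have := reach_sup_left hC t h
  rwa [sup_eq_left.2 ht] at this


theorem chain_pad (hC : IsLatticeCongruence C) {γ : Ordinal.{u}} {x : Ordinal.{u} → L}
    (hx : ChainOn C γ x) {δ : Ordinal.{u}} (hγδ : γ ≤ δ) :
    ∃ x' : Ordinal.{u} → L, ChainOn C δ x' ∧ x' 0 = x 0 ∧ x' δ = x γ := by
  set x' : Ordinal.{u} → L := fun α => if α ≤ γ then x α else x γ with hx'
  have hval : ∀ {α : Ordinal.{u}}, α ≤ γ → x' α = x α := by
    intro α h; rw [hx']; simp only [if_pos h]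
  have hval' : ∀ {α : Ordinal.{u}}, ¬ (α ≤ γ) → x' α = x γ := by
    intro α h; rw [hx']; simp only [if_neg h]
  refine ⟨x', ⟨?_, ?_, ?_⟩, hval ((zero_le (a := γ))), ?_⟩
  · intro α _ β _ hαβ
    by_cases hβγ : β ≤ γ
    · have hαγ : α ≤ γ := hαβ.trans hβγ
      rw [hval hαγ, hval hβγ]
      exact hx.1 (Set.mem_Iic.2 hαγ) (Set.mem_Iic.2 hβγ) hαβ
    · rw [hval' hβγ]
      by_cases hαγ : α ≤ γ
      · rw [hval hαγ]
        exact hx.1 (Set.mem_Iic.2 hαγ) (Set.mem_Iic.2 le_rfl) hαγ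
      · rw [hval' hαγ]
  · intro α _
    by_cases h1 : α < γ
    · have h2 : α + 1 ≤ γ := by rw [Ordinal.add_one_eq_succ]; exact Order.succ_le_of_lt h1
      rw [hval h1.le, hval h2]
      exact hx.2.1 α h1
    · have hα1 : ¬ (α + 1 ≤ γ) := by
        intro h
        exact h1 (lt_of_lt_of_le (by rw [Ordinal.add_one_eq_succ]; exact Order.lt_succ α) h)
      rw [hval' hα1]
      by_cases hαγ : α ≤ γ
      · rw [hval hαγ]
        have : α = γ := le_antisymm hαγ (not_lt.1 h1)
        rw [this]
        exact hC.1.1 (x γ)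
      · rw [hval' hαγ]
        exact hC.1.1 (x γ)
  · intro β _ hlim
    by_cases hβγ : β ≤ γ
    · rw [hval hβγ, hx.2.2 β hβγ hlim]
      refine iSup_congr fun α => ?_
      rw [hval (le_of_lt (lt_of_lt_of_le α.2 hβγ))]
    · rw [hval' hβγ]
      have hγβ : γ < β := not_le.1 hβγ
      refine le_antisymm ?_ (iSup_le fun α => ?_)
      · exact le_iSup_of_le ⟨γ, hγβ⟩ (le_of_eq (hval le_rfl).symm)
      · by_cases hαγ : (α : Ordinal) ≤ γ
        · rw [hval hαγ]
          exact hx.1 (Set.mem_Iic.2 hαγ) (Set.mem_Iic.2 le_rfl) hαγ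
        · rw [hval' hαγ]
  · by_cases hδγ : δ ≤ γ
    · rw [hval hδγ]
      have : δ = γ := le_antisymm hδγ hγδ
      rw [this]
    · rw [hval' hδγ]

theorem Reach.trans (hC : IsLatticeCongruence C) {u v w : L} (h1 : Reach C u v)
    (h2 : Reach C v w) : Reach C u w := by
  obtain ⟨γ₁, x₁, hx₁, hx₁0, hx₁γ⟩ := h1
  obtain ⟨γ₂, x₂, hx₂, hx₂0, hx₂γ⟩ := h2
  set z : Ordinal.{u} → L := fun α => if α ≤ γ₁ then x₁ α else x₂ (α - γ₁) with hz
  have hz2 : ∀ η ≤ γ₂, z (γ₁ + η) = x₂ η := by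
    intro η hη
    by_cases h0 : γ₁ + η ≤ γ₁
    · have : η = 0 := by
        have := (add_le_add_iff_left γ₁).1 (by rwa [add_zero] : γ₁ + η ≤ γ₁ + 0)
        exact le_antisymm this ((zero_le (a := η)))
      subst this
      rw [hz]; simp only [add_zero, if_pos le_rfl]
      rw [hx₁γ, hx₂0]
    · rw [hz]; simp only [if_neg h0, Ordinal.add_sub_cancel]
  have hmem : ∀ {η : Ordinal.{u}}, η ≤ γ₂ → η ∈ Set.Iic γ₂ := fun h => Set.mem_Iic.2 h
  have hmono : MonotoneOn z (Set.Iic (γ₁ + γ₂)) := by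
    intro α hα β hβ hαβ
    by_cases hβ1 : β ≤ γ₁
    · have hα1 : α ≤ γ₁ := hαβ.trans hβ1
      rw [hz]; simp only [if_pos hα1, if_pos hβ1]
      exact hx₁.1 (Set.mem_Iic.2 hα1) (Set.mem_Iic.2 hβ1) hαβ
    · have hβsub : β - γ₁ ≤ γ₂ := Ordinal.sub_le.2 (Set.mem_Iic.1 hβ)
      by_cases hα1 : α ≤ γ₁
      · rw [hz]; simp only [if_pos hα1, if_neg hβ1]
        calc x₁ α ≤ x₁ γ₁ := hx₁.1 (Set.mem_Iic.2 hα1) (Set.mem_Iic.2 le_rfl) hα1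
        _ = x₂ 0 := by rw [hx₁γ, hx₂0]
        _ ≤ x₂ (β - γ₁) := hx₂.1 (hmem (zero_le)) (hmem hβsub) (zero_le)
      · rw [hz]; simp only [if_neg hα1, if_neg hβ1]
        have hαsub : α - γ₁ ≤ γ₂ := Ordinal.sub_le.2 (Set.mem_Iic.1 hα)
        refine hx₂.1 (hmem hαsub) (hmem hβsub) ?_
        refine Ordinal.sub_le.2 ?_
        rwa [Ordinal.add_sub_cancel_of_le (le_of_not_ge hβ1)]
  refine ⟨γ₁ + γ₂, z, ⟨hmono, ?_, ?_⟩, ?_, ?_⟩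
  · -- successor steps
    intro α hα
    by_cases h1 : α < γ₁
    · have h2 : α + 1 ≤ γ₁ := by rw [Ordinal.add_one_eq_succ]; exact Order.succ_le_of_lt h1
      rw [hz]; simp only [if_pos h1.le, if_pos h2]
      exact hx₁.2.1 α h1
    · by_cases hα1 : α ≤ γ₁
      · have hαe : α = γ₁ := le_antisymm hα1 (not_lt.1 h1)
        subst hαe
        have hγ₂ : 0 < γ₂ := by
          by_contra h0
          have : γ₂ = 0 := le_antisymm (not_lt.1 h0) ((zero_le (a := γ₂)))
          rw [this, add_zero] at hα
          exact absurd hα (lt_irrefl α)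
        have e0 : z α = x₂ 0 := by
          rw [hz]; simp only [if_pos le_rfl]; rw [hx₁γ, hx₂0]
        have e1 : z (α + 1) = x₂ 1 := by
          have := hz2 1 (by rwa [← Ordinal.succ_zero, Order.succ_le_iff])
          exact this
        rw [e0, e1]
        have := hx₂.2.1 0 hγ₂
        rwa [zero_add] at this
      · have hγα : γ₁ ≤ α := le_of_not_ge hα1
        have he : γ₁ + (α - γ₁) = α := Ordinal.add_sub_cancel_of_le hγα
        have hsub : α - γ₁ < γ₂ := by
          rw [Ordinal.sub_lt_of_le hγα]
          exact hα
        have e0 : z α = x₂ (α - γ₁) := by rw [hz]; simp only [if_neg hα1]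
        have e1 : z (α + 1) = x₂ (α - γ₁ + 1) := by
          have : γ₁ + (α - γ₁ + 1) = α + 1 := by rw [← add_assoc, he]
          rw [← this]
          exact hz2 _ (by rw [Ordinal.add_one_eq_succ]; exact Order.succ_le_of_lt hsub)
        rw [e0, e1]
        exact hx₂.2.1 _ hsub
  · -- limits
    intro β hβ hlim
    by_cases hβ1 : β ≤ γ₁
    · rw [hz]; simp only [if_pos hβ1]
      rw [hx₁.2.2 β hβ1 hlim]
      refine iSup_congr fun α => ?_
      rw [if_pos (le_of_lt (lt_of_lt_of_le α.2 hβ1))]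
    · have hγβ : γ₁ ≤ β := (not_le.1 hβ1).le
      set ξ := β - γ₁ with hξ
      have heβ : γ₁ + ξ = β := Ordinal.add_sub_cancel_of_le hγβ
      have hξpos : ξ ≠ 0 := by
        intro h0
        rw [h0, add_zero] at heβ
        exact hβ1 heβ.ge
      have hξlim : Order.IsSuccLimit ξ := by
        rcases Ordinal.zero_or_succ_or_isSuccLimit ξ with h | ⟨p, hp⟩ | h
        · exact absurd h hξpos
        · exfalso
          rw [← hp, Ordinal.add_succ] at heβ
          exact (Order.not_isSuccLimit_succ _) (heβ ▸ hlim)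
        · exact h
      have hξγ₂ : ξ ≤ γ₂ := Ordinal.sub_le.2 hβ
      have e0 : z β = x₂ ξ := by rw [hz]; simp only [if_neg hβ1]; rfl
      refine le_antisymm ?_ (iSup_le fun α => ?_)
      · rw [e0, hx₂.2.2 ξ hξγ₂ hξlim]
        refine iSup_le fun η => ?_
        refine le_iSup_of_le ⟨γ₁ + η, by rw [← heβ]; exact add_lt_add_right η.2 γ₁⟩ ?_
        exact (hz2 η (le_of_lt (lt_of_lt_of_le η.2 hξγ₂))).ge
      · exact hmono (Set.mem_Iic.2 (α.2.le.trans hβ)) (Set.mem_Iic.2 hβ) α.2.le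
  · rw [hz]; simp only [if_pos ((zero_le (a := γ₁)))]; exact hx₁0
  · rw [← hx₂γ, ← hz2 γ₂ le_rfl]

theorem reach_concat (hC : IsLatticeCongruence C) (l : Ordinal.{u}) (y : Ordinal.{u} → L)
    (hmono : MonotoneOn y (Set.Iic l))
    (hcont : ∀ β ≤ l, Order.IsSuccLimit β → y β = ⨆ α : Set.Iio β, y α)
    (hstep : ∀ β < l, Reach C (y β) (y (β + 1))) :
    Reach C (y 0) (y l) := by
  classical
  have H : ∀ β : Ordinal.{u}, ∃ (γ' : Ordinal.{u}) (x' : Ordinal.{u} → L),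
      β < l → (ChainOn C γ' x' ∧ x' 0 = y β ∧ x' γ' = y (β + 1)) := by
    intro β
    by_cases h : β < l
    · obtain ⟨γ', x', hc, h0, h1⟩ := hstep β h
      exact ⟨γ', x', fun _ => ⟨hc, h0, h1⟩⟩
    · exact ⟨0, fun _ => y 0, fun h' => absurd h' h⟩
  choose len ch hch using H
  set g : Ordinal.{u} := Ordinal.bsup.{u, u} l (fun β _ => len β) + 1 with hg
  have hg0 : g ≠ 0 := by rw [hg, Ordinal.add_one_eq_succ]; exact Ordinal.succ_ne_zero _
  have hgpos : 0 < g := pos_iff_ne_zero.2 hg0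
  have hlen : ∀ β, β < l → len β ≤ g := fun β h =>
    (Ordinal.le_bsup (fun β _ => len β) β h).trans ((le_add_right le_rfl))
  have H2 : ∀ β : Ordinal.{u}, ∃ x' : Ordinal.{u} → L,
      β < l → (ChainOn C g x' ∧ x' 0 = y β ∧ x' g = y (β + 1)) := by
    intro β
    by_cases h : β < l
    · obtain ⟨x', hc, h0, h1⟩ := chain_pad hC (hch β h).1 (hlen β h)
      exact ⟨x', fun _ => ⟨hc, by rw [h0, (hch β h).2.1], by rw [h1, (hch β h).2.2]⟩⟩
    · exact ⟨fun _ => y 0, fun h' => absurd h' h⟩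
  choose X hX using H2
  set z : Ordinal.{u} → L :=
    fun α => if h : α / g < l then X (α / g) (α % g) else y l with hzdef
  -- value lemmas
  have hzv : ∀ {α : Ordinal.{u}}, α / g < l → z α = X (α / g) (α % g) := by
    intro α h; simp only [hzdef, dif_pos h]
  have hzn : ∀ {α : Ordinal.{u}}, ¬ (α / g < l) → z α = y l := by
    intro α h; simp only [hzdef, dif_neg h]
  have hzval : ∀ β, β < l → ∀ η, η < g → z (g * β + η) = X β η := by
    intro β hβ η hη
    have hd : (g * β + η) / g = β := by
      rw [Ordinal.mul_add_div _ hg0, Ordinal.div_eq_zero_of_lt hη, add_zero]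
    have hm : (g * β + η) % g = η := by
      rw [Ordinal.mul_add_mod_self, Ordinal.mod_eq_of_lt hη]
    rw [hzv (by rw [hd]; exact hβ), hd, hm]
  have hzub : ∀ {α : Ordinal.{u}}, α / g < l → z α ≤ y (α / g + 1) := by
    intro α h
    rw [hzv h, ← (hX _ h).2.2]
    exact (hX _ h).1.1 (Set.mem_Iic.2 (Ordinal.mod_lt α hg0).le) (Set.mem_Iic.2 le_rfl)
      (Ordinal.mod_lt α hg0).le
  have hzlb : ∀ {α : Ordinal.{u}}, α / g < l → y (α / g) ≤ z α := by
    intro α h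
    rw [hzv h, ← (hX _ h).2.1]
    exact (hX _ h).1.1 (Set.mem_Iic.2 ((zero_le (a := g))))
      (Set.mem_Iic.2 (Ordinal.mod_lt α hg0).le) (zero_le)
  have hsucc_le : ∀ {p q : Ordinal.{u}}, p < q → p + 1 ≤ q := by
    intro p q h; rw [Ordinal.add_one_eq_succ]; exact Order.succ_le_of_lt h
  -- monotonicity
  have hzmono : MonotoneOn z (Set.Iic (g * l)) := by
    intro α hα β hβ hαβ
    by_cases hβl : β / g < l
    · have hαl : α / g < l := lt_of_le_of_lt (Ordinal.div_le_left hαβ g) hβl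
      rcases lt_or_eq_of_le (Ordinal.div_le_left hαβ g) with hlt | heq
      · refine (hzub hαl).trans (le_trans ?_ (hzlb hβl))
        exact hmono (Set.mem_Iic.2 ((hsucc_le hlt).trans hβl.le)) (Set.mem_Iic.2 hβl.le)
          (hsucc_le hlt)
      · have hmα : α % g ≤ β % g := by
          by_contra hcon
          have h1 : β % g < α % g := not_le.1 hcon
          have h2 : β < α :=
            calc β = g * (β / g) + β % g := (Ordinal.div_add_mod β g).symm
            _ < g * (β / g) + α % g := add_lt_add_right h1 _
            _ = g * (α / g) + α % g := by rw [heq]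
            _ = α := Ordinal.div_add_mod α g
          exact absurd hαβ (not_le.2 h2)
        rw [hzv hαl, hzv hβl, heq]
        exact (hX (β / g) hβl).1.1 (Set.mem_Iic.2 (Ordinal.mod_lt α hg0).le)
          (Set.mem_Iic.2 (Ordinal.mod_lt β hg0).le) hmα
    · rw [hzn hβl]
      by_cases hαl : α / g < l
      · exact (hzub hαl).trans
          (hmono (Set.mem_Iic.2 (hsucc_le hαl)) (Set.mem_Iic.2 le_rfl) (hsucc_le hαl))
      · rw [hzn hαl]
  have hz0 : z 0 = y 0 := by
    by_cases hl : (0 : Ordinal.{u}) < l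
    · have h0 : (0 : Ordinal.{u}) / g = 0 := Ordinal.zero_div g
      rw [hzv (by rw [h0]; exact hl), h0, Ordinal.zero_mod]
      exact (hX 0 hl).2.1
    · have hl0 : l = 0 := le_antisymm (not_lt.1 hl) ((zero_le (a := l)))
      rw [hzn (by rw [Ordinal.zero_div]; exact hl), hl0]
  have hzΓ : z (g * l) = y l := by
    refine hzn ?_
    rw [Ordinal.mul_div_cancel _ hg0]
    exact lt_irrefl l
  refine ⟨g * l, z, ⟨hzmono, ?_, ?_⟩, hz0, hzΓ⟩
  · -- successor steps
    intro α hα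
    have hq : α / g < l := (Ordinal.div_lt hg0).2 hα
    have hr : α % g < g := Ordinal.mod_lt α hg0
    have e : g * (α / g) + α % g = α := Ordinal.div_add_mod α g
    have e1 : g * (α / g) + (α % g + 1) = α + 1 := by rw [← add_assoc, e]
    have hz1 : z α = X (α / g) (α % g) := hzv hq
    have pairC : (X (α / g) (α % g), X (α / g) (α % g + 1)) ∈ C := (hX _ hq).1.2.1 _ hr
    by_cases hr1 : α % g + 1 < g
    · have hz2' : z (α + 1) = X (α / g) (α % g + 1) := by
        rw [← e1]; exact hzval _ hq _ hr1
      rw [hz1, hz2']; exact pairC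
    · have hr1e : α % g + 1 = g := le_antisymm (hsucc_le hr) (not_lt.1 hr1)
      have e2 : α + 1 = g * (α / g + 1) := by
        rw [mul_add, mul_one, ← e1, hr1e]
      have hdiv : (α + 1) / g = α / g + 1 := by rw [e2, Ordinal.mul_div_cancel _ hg0]
      have hXg : X (α / g) (α % g + 1) = y (α / g + 1) := by
        rw [hr1e]; exact (hX _ hq).2.2
      have hmod : (α + 1) % g = 0 := by
        have h3 := Ordinal.div_add_mod (α + 1) g
        rw [hdiv] at h3
        refine (add_left_cancel_iff (a := g * (α / g + 1))).1 ?_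
        rw [add_zero, h3]
        exact e2
      have hz2' : z (α + 1) = y (α / g + 1) := by
        by_cases hq1 : α / g + 1 < l
        · rw [hzv (by rw [hdiv]; exact hq1), hdiv, hmod]
          exact (hX _ hq1).2.1
        · have hqe : α / g + 1 = l := le_antisymm (hsucc_le hq) (not_lt.1 hq1)
          rw [hzn (by rw [hdiv]; exact hq1), hqe]
      rw [hz1, hz2', ← hXg]
      exact pairC
  · -- limit continuity
    intro δ hδ hlim
    refine le_antisymm ?_ (iSup_le fun α =>
      hzmono (Set.mem_Iic.2 (α.2.le.trans hδ)) (Set.mem_Iic.2 hδ) α.2.le)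
    have e : g * (δ / g) + δ % g = δ := Ordinal.div_add_mod δ g
    have hql' : δ / g ≤ l := by
      have h1 := Ordinal.div_le_left hδ g
      rwa [Ordinal.mul_div_cancel _ hg0] at h1
    by_cases hr0 : δ % g = 0
    · have eδ : g * (δ / g) = δ := by
        conv_rhs => rw [← e]
        rw [hr0, add_zero]
      have hzy : z δ = y (δ / g) := by
        by_cases hql : δ / g < l
        · rw [hzv hql, hr0]
          exact (hX _ hql).2.1
        · rw [hzn hql, le_antisymm hql' (not_lt.1 hql)]
      rcases Ordinal.zero_or_succ_or_isSuccLimit (δ / g) with hq0 | ⟨p, hp⟩ | hqlim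
      · exfalso
        rw [hq0, mul_zero] at eδ
        exact hlim.pos.ne' eδ.symm
      · -- δ / g = succ p
        have hpl : p < l := lt_of_lt_of_le (hp ▸ Order.lt_succ p) hql'
        have hglim : Order.IsSuccLimit g := by
          rcases Ordinal.zero_or_succ_or_isSuccLimit g with h | ⟨m, hm⟩ | h
          · exact absurd h hg0
          · exfalso
            have hδs : δ = Order.succ (g * p + m) := by
              conv_lhs => rw [← eδ]
              rw [← hp, Ordinal.mul_succ, ← hm, Ordinal.add_succ]
            exact Order.not_isSuccLimit_succ _ (hδs ▸ hlim)
          · exact h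
        have h5 : y (δ / g) = X p g := by
          rw [← hp, ← Ordinal.add_one_eq_succ]
          exact ((hX p hpl).2.2).symm
        rw [hzy, h5, (hX p hpl).1.2.2 g le_rfl hglim]
        refine iSup_le fun η => ?_
        refine le_iSup_of_le ⟨g * p + η, ?_⟩ (hzval p hpl η η.2).ge
        calc g * p + (η : Ordinal.{u}) < g * p + g := add_lt_add_right η.2 _
        _ = g * (δ / g) := by rw [← hp, Ordinal.mul_succ]
        _ = δ := eδ
      · -- δ / g limit
        rw [hzy, hcont _ hql' hqlim]
        refine iSup_le fun β => ?_
        have hβl : (β : Ordinal.{u}) < l := lt_of_lt_of_le β.2 hql'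
        have hv : z (g * β) = y β := by
          have h7 := hzval β hβl 0 hgpos
          rw [add_zero] at h7
          rw [h7]
          exact (hX β hβl).2.1
        refine le_iSup_of_le ⟨g * β, ?_⟩ hv.ge
        exact Set.mem_Iio.2 ((mul_lt_mul_of_pos_left β.2 hgpos).trans_le eδ.le)
    · -- δ % g ≠ 0
      have hql : δ / g < l := by
        rcases lt_or_eq_of_le hql' with h | h
        · exact h
        · exfalso
          have h6 : g * l + δ % g ≤ g * l + 0 := by
            rw [add_zero]
            calc g * l + δ % g = δ := by rw [← h]; exact e
            _ ≤ g * l := hδ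
          exact hr0 (le_antisymm ((add_le_add_iff_left _).1 h6) (zero_le))
      have hrlim : Order.IsSuccLimit (δ % g) := by
        rcases Ordinal.zero_or_succ_or_isSuccLimit (δ % g) with h | ⟨m, hm⟩ | h
        · exact absurd h hr0
        · exfalso
          have hδs : δ = Order.succ (g * (δ / g) + m) := by
            conv_lhs => rw [← e]
            rw [← hm, Ordinal.add_succ]
          exact Order.not_isSuccLimit_succ _ (hδs ▸ hlim)
        · exact h
      have hrg : δ % g < g := Ordinal.mod_lt δ hg0
      rw [hzv hql, (hX _ hql).1.2.2 _ hrg.le hrlim]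
      refine iSup_le fun η => ?_
      have hηg : (η : Ordinal.{u}) < g := lt_trans η.2 hrg
      refine le_iSup_of_le ⟨g * (δ / g) + η, ?_⟩ (hzval _ hql η hηg).ge
      exact Set.mem_Iio.2 ((add_lt_add_right η.2 _).trans_le e.le)

theorem reach_iSup (hC : IsLatticeCongruence C) {ι : Type u} (u : L) (v : ι → L)
    (h : ∀ i, Reach C u (v i)) : Reach C u (u ⊔ ⨆ i, v i) := by
  classical
  set r := @WellOrderingRel ι with hr
  set κ : Ordinal.{u} := Ordinal.type r with hκ
  set y : Ordinal.{u} → L :=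
    fun β => u ⊔ ⨆ i : {i : ι // Ordinal.typein r i < β}, v i.1 with hy
  have hyd : ∀ β, y β = u ⊔ ⨆ i : {i : ι // Ordinal.typein r i < β}, v i.1 := by
    intro β; simp only [hy]
  have huy : ∀ β, u ≤ y β := by intro β; rw [hyd β]; exact le_sup_left
  have hvle : ∀ (i : ι) {β : Ordinal.{u}}, Ordinal.typein r i < β → v i ≤ y β := by
    intro i β hi
    rw [hyd β]
    exact le_trans (le_iSup_of_le ⟨i, hi⟩ le_rfl) le_sup_right
  have hymono : Monotone y := by
    intro β β' hββ'
    rw [hyd β, hyd β']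
    refine sup_le_sup_left (iSup_le fun i => ?_) u
    exact le_iSup_of_le (⟨i.1, lt_of_lt_of_le i.2 hββ'⟩ :
      {j : ι // Ordinal.typein r j < β'}) le_rfl
  have hy0 : y 0 = u := by
    haveI : IsEmpty {i : ι // Ordinal.typein r i < 0} := ⟨fun i => not_lt_zero i.2⟩
    rw [hyd 0, iSup_of_empty, sup_bot_eq]
  have hcont : ∀ β ≤ κ, Order.IsSuccLimit β → y β = ⨆ α : Set.Iio β, y α := by
    intro β _ hβlim
    refine le_antisymm ?_ (iSup_le fun α => hymono α.2.le)
    rw [hyd β]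
    refine sup_le ?_ (iSup_le fun i => ?_)
    · exact le_iSup_of_le ⟨0, hβlim.pos⟩ (huy 0)
    · have h1 : (Ordinal.typein r i.1 : Ordinal.{u}) < Ordinal.typein r i.1 + 1 := by
        rw [Ordinal.add_one_eq_succ]
        exact Order.lt_succ _
      have h2 : (Ordinal.typein r i.1 + 1 : Ordinal.{u}) ∈ Set.Iio β := by
        rw [Ordinal.add_one_eq_succ]
        exact Set.mem_Iio.2 (hβlim.succ_lt i.2)
      exact le_iSup_of_le ⟨_, h2⟩ (hvle i.1 h1)
  have hstep : ∀ β < κ, Reach C (y β) (y (β + 1)) := by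
    intro β hβ
    obtain ⟨i₀, hi₀⟩ := Ordinal.typein_surj r hβ
    have hkey : y (β + 1) = y β ⊔ v i₀ := by
      refine le_antisymm ?_ (sup_le (hymono ((le_add_right le_rfl))) (hvle i₀ ?_))
      · rw [hyd (β + 1)]
        refine sup_le ((huy β).trans le_sup_left) (iSup_le fun i => ?_)
        have hi : Ordinal.typein r i.1 ≤ β := Order.lt_succ_iff.1
          (by rw [← Ordinal.add_one_eq_succ]; exact i.2)
        rcases hi.lt_or_eq with hlt | heq
        · exact (hvle i.1 hlt).trans le_sup_left
        · have hii : i.1 = i₀ := Ordinal.typein_injective r (by rw [heq, hi₀])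
          exact (congrArg v hii).trans_le le_sup_right
      · rw [hi₀, Ordinal.add_one_eq_succ]
        exact Order.lt_succ β
    rw [hkey]
    exact (h i₀).up hC (huy β)
  have hfin := reach_concat hC κ y (hymono.monotoneOn _) hcont hstep
  rw [hy0] at hfin
  have hκval : y κ = u ⊔ ⨆ i, v i := by
    rw [hyd κ]
    refine congrArg (fun w => u ⊔ w) (le_antisymm (iSup_le fun i => le_iSup v i.1) ?_)
    exact iSup_le fun i => le_iSup_of_le ⟨i, Ordinal.typein_lt_type r i⟩ le_rfl
  rwa [hκval] at hfin

def ChainRel (C : Set (L × L)) : Set (L × L) :=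
  {p | ∃ u w, u ≤ p.1 ⊓ p.2 ∧ p.1 ⊔ p.2 ≤ w ∧ Reach C u w}

theorem inf_sup_mem (hC : IsLatticeCongruence C) {a b : L} (h : (a, b) ∈ C) :
    (a ⊓ b, a ⊔ b) ∈ C := by
  have hbb : (b, b) ∈ C := hC.1.refl b
  have h1 : (a ⊓ b, b) ∈ C := by simpa using (hC.2 (a, b) (b, b) h hbb).1
  have h2 : (a ⊔ b, b) ∈ C := by simpa using (hC.2 (a, b) (b, b) h hbb).2
  exact hC.1.trans h1 (hC.1.symm h2)

theorem subset_chainRel (hC : IsLatticeCongruence C) : C ⊆ ChainRel C := by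
  rintro ⟨a, b⟩ h
  exact ⟨a ⊓ b, a ⊔ b, le_rfl, le_rfl, reach_single hC (inf_sup_mem hC h) inf_le_sup⟩

theorem chainRel_refl (a : L) : (a, a) ∈ ChainRel C :=
  ⟨a, a, by simp, by simp, reach_refl a⟩

theorem chainRel_symm {a b : L} (h : (a, b) ∈ ChainRel C) : (b, a) ∈ ChainRel C := by
  obtain ⟨u, w, hu, hw, hr⟩ := h
  exact ⟨u, w, by rwa [inf_comm], by rwa [sup_comm], hr⟩

theorem chainRel_trans (hC : IsLatticeCongruence C) {a b c : L}
    (h1 : (a, b) ∈ ChainRel C) (h2 : (b, c) ∈ ChainRel C) : (a, c) ∈ ChainRel C := by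
  obtain ⟨u₁, w₁, hu₁, hw₁, r1⟩ := h1
  obtain ⟨u₂, w₂, hu₂, hw₂, r2⟩ := h2
  have hu₂w₁ : u₂ ≤ u₂ ⊓ w₁ :=
    le_inf le_rfl (hu₂.trans (inf_le_left.trans (le_sup_right.trans hw₁)))
  have hu₁t : u₁ ≤ (u₂ ⊓ w₁) ⊔ w₂ :=
    hu₁.trans (inf_le_right.trans (le_sup_left.trans (hw₂.trans le_sup_right)))
  have phase1 : Reach C (u₂ ⊓ u₁) (u₂ ⊓ w₁) := reach_inf_left hC u₂ r1
  have phase2 : Reach C (u₂ ⊓ w₁) ((u₂ ⊓ w₁) ⊔ w₂) := r2.up hC hu₂w₁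
  have phase3 : Reach C ((u₂ ⊓ w₁) ⊔ w₂) (((u₂ ⊓ w₁) ⊔ w₂) ⊔ w₁) := r1.up hC hu₁t
  refine ⟨u₂ ⊓ u₁, ((u₂ ⊓ w₁) ⊔ w₂) ⊔ w₁, ?_, ?_, (phase1.trans hC phase2).trans hC phase3⟩
  · exact le_inf (inf_le_right.trans (hu₁.trans inf_le_left))
      (inf_le_left.trans (hu₂.trans inf_le_right))
  · refine sup_le ?_ ?_
    · exact (le_sup_left.trans hw₁).trans le_sup_right
    · exact (le_sup_right.trans hw₂).trans ((le_sup_right (a := u₂ ⊓ w₁)).trans le_sup_left)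

theorem chainRel_inf (hC : IsLatticeCongruence C) (p q : L × L)
    (hp : p ∈ ChainRel C) (hq : q ∈ ChainRel C) :
    (p.1 ⊓ q.1, p.2 ⊓ q.2) ∈ ChainRel C := by
  obtain ⟨u₁, w₁, hu₁, hw₁, r1⟩ := hp
  obtain ⟨u₂, w₂, hu₂, hw₂, r2⟩ := hq
  have phase1 : Reach C (u₂ ⊓ u₁) (u₂ ⊓ w₁) := reach_inf_left hC u₂ r1
  have phase2 : Reach C (w₁ ⊓ u₂) (w₁ ⊓ w₂) := reach_inf_left hC w₁ r2
  rw [inf_comm w₁ u₂] at phase2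
  refine ⟨u₂ ⊓ u₁, w₁ ⊓ w₂, ?_, ?_, phase1.trans hC phase2⟩
  · refine le_inf (le_inf ?_ ?_) (le_inf ?_ ?_)
    · exact inf_le_right.trans (hu₁.trans inf_le_left)
    · exact inf_le_left.trans (hu₂.trans inf_le_left)
    · exact inf_le_right.trans (hu₁.trans inf_le_right)
    · exact inf_le_left.trans (hu₂.trans inf_le_right)
  · refine sup_le (le_inf ?_ ?_) (le_inf ?_ ?_)
    · exact inf_le_left.trans (le_sup_left.trans hw₁)
    · exact inf_le_right.trans (le_sup_left.trans hw₂)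
    · exact inf_le_left.trans (le_sup_right.trans hw₁)
    · exact inf_le_right.trans (le_sup_right.trans hw₂)

theorem chainRel_sSup (hC : IsLatticeCongruence C) (S : Set (L × L))
    (hS : S ⊆ ChainRel C) :
    (sSup (Prod.fst '' S), sSup (Prod.snd '' S)) ∈ ChainRel C := by
  classical
  set A := sSup (Prod.fst '' S) with hA
  set B := sSup (Prod.snd '' S) with hB
  have hfst : ∀ p : S, (p : L × L).1 ≤ A := fun p => le_sSup ⟨p, p.2, rfl⟩
  have hsnd : ∀ p : S, (p : L × L).2 ≤ B := fun p => le_sSup ⟨p, p.2, rfl⟩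
  choose U W hU hW hR using fun p : S => hS p.2
  have hstart : ∀ p : S, U p ≤ A ⊓ B := fun p =>
    (hU p).trans (le_inf (inf_le_left.trans (hfst p)) (inf_le_right.trans (hsnd p)))
  have hreach : ∀ p : S, Reach C (A ⊓ B) ((A ⊓ B) ⊔ W p) := fun p => (hR p).up hC (hstart p)
  have main := reach_iSup hC (A ⊓ B) (fun p : S => (A ⊓ B) ⊔ W p) hreach
  refine ⟨A ⊓ B, (A ⊓ B) ⊔ ⨆ p : S, ((A ⊓ B) ⊔ W p), le_rfl, ?_, main⟩
  have hWle : ∀ p : S, W p ≤ (A ⊓ B) ⊔ ⨆ q : S, ((A ⊓ B) ⊔ W q) := fun p =>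
    (le_sup_right.trans (le_iSup (fun q : S => (A ⊓ B) ⊔ W q) p)).trans le_sup_right
  refine sup_le (sSup_le ?_) (sSup_le ?_)
  · rintro x ⟨p, hp, rfl⟩
    exact (le_sup_left.trans (hW ⟨p, hp⟩)).trans (hWle ⟨p, hp⟩)
  · rintro x ⟨p, hp, rfl⟩
    exact (le_sup_right.trans (hW ⟨p, hp⟩)).trans (hWle ⟨p, hp⟩)

theorem chainRel_isFrameCongruence (hC : IsLatticeCongruence C) :
    IsFrameCongruence (ChainRel C) :=
  ⟨⟨fun a => chainRel_refl a, fun h => chainRel_symm h, fun h1 h2 => chainRel_trans hC h1 h2⟩,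
    fun p q hp hq => chainRel_inf hC p q hp hq, fun S hS => chainRel_sSup hC S hS⟩

theorem chain_mem_frameCong {D : Set (L × L)} (hD : IsFrameCongruence D) (hCD : C ⊆ D)
    {a b : L} (γ : Ordinal.{u}) (x : Ordinal.{u} → L)
    (hmono : MonotoneOn x (Set.Iic γ)) (h0 : x 0 ≤ a ⊓ b) (hγ : a ⊔ b ≤ x γ)
    (hsucc : ∀ α < γ, (x α, x (α + 1)) ∈ C)
    (hlim : ∀ β ≤ γ, Order.IsSuccLimit β → x β = ⨆ α : Set.Iio β, x α) :
    (a, b) ∈ D := by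
  have hjoin : ∀ p q : L × L, p ∈ D → q ∈ D → (p.1 ⊔ q.1, p.2 ⊔ q.2) ∈ D := by
    intro p q hp hq
    have h1 := hD.2.2 {p, q} (by
      rintro z hz
      rcases hz with rfl | rfl
      · exact hp
      · exact hq)
    simpa [Set.image_pair, sSup_pair] using h1
  have hmem : ∀ α, α ≤ γ → (x 0, x α) ∈ D := by
    intro α
    induction α using Ordinal.induction with
    | _ α IH =>
      intro hαγ
      rcases Ordinal.zero_or_succ_or_isSuccLimit α with rfl | ⟨p, rfl⟩ | hlim'
      · exact hD.1.refl (x 0)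
      · have hpγ : p < γ := lt_of_lt_of_le (Order.lt_succ p) hαγ
        have h1 : (x p, x (p + 1)) ∈ D := hCD (hsucc p hpγ)
        have h2 := IH p (Order.lt_succ p) hpγ.le
        rw [← Ordinal.add_one_eq_succ]
        exact hD.1.trans h2 h1
      · set S : Set (L × L) := (fun α' : Ordinal.{u} => ((x 0 : L), x α')) '' Set.Iio α
          with hSdef
        have hSD : S ⊆ D := by
          rintro z ⟨α', hα', rfl⟩
          exact IH α' hα' (le_of_lt (lt_of_lt_of_le hα' hαγ))
        have h3 := hD.2.2 S hSD
        have hne : (Set.Iio α).Nonempty := ⟨0, hlim'.pos⟩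
        have hfst : Prod.fst '' S = {x 0} := by
          rw [hSdef, Set.image_image]
          exact hne.image_const _
        have hsnd : sSup (Prod.snd '' S) = x α := by
          rw [hSdef, Set.image_image, sSup_image']
          exact (hlim α hαγ hlim').symm
        rw [hfst, sSup_singleton, hsnd] at h3
        exact h3
  have hxx := hmem γ le_rfl
  have haD : (a, x γ) ∈ D := by
    have h4 := hjoin (x 0, x γ) (a, a) hxx (hD.1.refl a)
    rwa [show x 0 ⊔ a = a from sup_eq_right.2 (h0.trans inf_le_left),
      show x γ ⊔ a = x γ from sup_eq_left.2 (le_sup_left.trans hγ)] at h4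
  have hbD : (b, x γ) ∈ D := by
    have h4 := hjoin (x 0, x γ) (b, b) hxx (hD.1.refl b)
    rwa [show x 0 ⊔ b = b from sup_eq_right.2 (h0.trans inf_le_right),
      show x γ ⊔ b = x γ from sup_eq_left.2 (le_sup_right.trans hγ)] at h4
  exact hD.1.trans haD (hD.1.symm hbD)

end FrameCongAux


/-- A pair `(a, b)` lies in the frame congruence generated by a lattice
congruence `C` iff it is connected by a transfinite increasing `C`-chain. -/
theorem mem_frameCongGen_iff_transfinite_chain {L : Type u} [Order.Frame L]
    (C : Set (L × L)) (hC : IsLatticeCongruence C) (a b : L) :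
    (a, b) ∈ frameCongGen C ↔
      ∃ (γ : Ordinal.{u}) (x : Ordinal.{u} → L),
        MonotoneOn x (Set.Iic γ) ∧
        x 0 ≤ a ⊓ b ∧
        a ⊔ b ≤ x γ ∧
        (∀ α < γ, (x α, x (α + 1)) ∈ C) ∧
        (∀ β ≤ γ, Order.IsSuccLimit β → x β = ⨆ α : Set.Iio β, x α) := by
  constructor
  · intro h
    have hmem := Set.mem_sInter.1 h (FrameCongAux.ChainRel C)
      ⟨FrameCongAux.chainRel_isFrameCongruence hC, FrameCongAux.subset_chainRel hC⟩
    obtain ⟨u, w, hu, hw, γ, x, hx, h0, hγ⟩ := hmem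
    exact ⟨γ, x, hx.1, by rw [h0]; exact hu, by rw [hγ]; exact hw, hx.2.1, hx.2.2⟩
  · rintro ⟨γ, x, hmono, h0, hγ, hsucc, hlim⟩
    exact Set.mem_sInter.2 fun D hD =>
      FrameCongAux.chain_mem_frameCong hD.1 hD.2 γ x hmono h0 hγ hsucc hlim
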